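/- Let Σxx ∈ ℝ^{dx×dx} and Σyy ∈ ℝ^{dy×dy} be symmetric positive definite, let Σxy ∈ ℝ^{dx×dy}, and set T = Σxx^{-1/2} Σxy Σyy^{-1/2} with ρ1 = ‖T‖. Let a1 ∈ ℝ^{dx} and b1 ∈ ℝ^{dy} be unit vectors forming a top singular pair of T, i.e. T b1 = ρ1 a1 and Tᵀ a1 = ρ1 b1, and set u* = Σxx^{-1/2} a1, v* = Σyy^{-1/2} b1. Let η ∈ (0,1) and let u ∈ ℝ^{dx}, v ∈ ℝ^{dy} be nonzero. If (1/2)·( uᵀΣxx u* / ‖Σxx^{1/2} u‖ + vᵀΣyy v* / ‖Σyy^{1/2} v‖ ) ≥ 1 − η/8, then uᵀ Σxy v / ( √(uᵀΣxx u) · √(vᵀΣyy v) ) ≥ ρ1 · (1 − η). -/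

import Mathlib

open Matrix Finset

/-- Euclidean norm of a vector in `ℝ^n`. -/
noncomputable def vnorm {n : Type*} [Fintype n] (x : n → ℝ) : ℝ := Real.sqrt (x ⬝ᵥ x)

/-- Spectral (operator) norm of a real matrix: the supremum of `‖A x‖` over unit vectors `x`. -/
noncomputable def specNorm {m n : Type*} [Fintype m] [Fintype n] (A : Matrix m n ℝ) : ℝ :=
  sSup {c : ℝ | ∃ x : n → ℝ, vnorm x = 1 ∧ c = vnorm (A.mulVec x)}

open scoped ComplexOrder in
/-- The positive semidefinite square root of a positive semidefinite matrix
(the definition `Matrix.PosSemidef.sqrt` of the older Mathlib, since removed). -/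
noncomputable def Matrix.PosSemidef.sqrt {n : Type*} [Fintype n] [DecidableEq n] {𝕜 : Type*}
    [RCLike 𝕜] {A : Matrix n n 𝕜} (hA : A.PosSemidef) : Matrix n n 𝕜 :=
  hA.1.eigenvectorUnitary.1 * diagonal ((↑) ∘ (√·) ∘ hA.1.eigenvalues) *
  (star hA.1.eigenvectorUnitary : Matrix n n 𝕜)

theorem Matrix.PosSemidef.sqrt_mul_self {n : Type*} [Fintype n] [DecidableEq n]
    {A : Matrix n n ℝ} (hA : A.PosSemidef) : hA.sqrt * hA.sqrt = A := by
  have hU : (star hA.1.eigenvectorUnitary : Matrix n n ℝ) * hA.1.eigenvectorUnitary.1 = 1 :=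
    hA.1.eigenvectorUnitary.2.1
  have hD : diagonal (RCLike.ofReal ∘ (√·) ∘ hA.1.eigenvalues) * diagonal (RCLike.ofReal ∘ (√·) ∘ hA.1.eigenvalues)
      = diagonal ((RCLike.ofReal : ℝ → ℝ) ∘ hA.1.eigenvalues) := by
    rw [diagonal_mul_diagonal]
    congr 1
    funext i
    simp [Real.mul_self_sqrt (hA.eigenvalues_nonneg i)]
  conv_rhs => rw [hA.1.spectral_theorem]
  unfold Matrix.PosSemidef.sqrt
  rw [Unitary.conjStarAlgAut_apply]
  calc _ = hA.1.eigenvectorUnitary.1 * (diagonal (RCLike.ofReal ∘ (√·) ∘ hA.1.eigenvalues) *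
        ((star hA.1.eigenvectorUnitary : Matrix n n ℝ) * hA.1.eigenvectorUnitary.1) *
        diagonal (RCLike.ofReal ∘ (√·) ∘ hA.1.eigenvalues)) *
        (star hA.1.eigenvectorUnitary : Matrix n n ℝ) := by simp only [Matrix.mul_assoc]
    _ = _ := by rw [hU, Matrix.mul_one, hD]

theorem Matrix.PosSemidef.posSemidef_sqrt {n : Type*} [Fintype n] [DecidableEq n]
    {A : Matrix n n ℝ} (hA : A.PosSemidef) : hA.sqrt.PosSemidef := by
  have h : (diagonal ((RCLike.ofReal : ℝ → ℝ) ∘ (√·) ∘ hA.1.eigenvalues)).PosSemidef :=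
    posSemidef_diagonal_iff.mpr fun i => Real.sqrt_nonneg _
  have := h.mul_mul_conjTranspose_same hA.1.eigenvectorUnitary.1
  unfold Matrix.PosSemidef.sqrt
  simpa [Matrix.star_eq_conjTranspose] using this

section aux
variable {n : Type*} [Fintype n]

lemma dot_self_nonneg' (x : n → ℝ) : 0 ≤ x ⬝ᵥ x :=
  Finset.sum_nonneg fun i _ => mul_self_nonneg _

lemma vnorm_nonneg' (x : n → ℝ) : 0 ≤ vnorm x := Real.sqrt_nonneg _

lemma sq_vnorm (x : n → ℝ) : vnorm x ^ 2 = x ⬝ᵥ x := Real.sq_sqrt (dot_self_nonneg' x)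

lemma vnorm_eq_zero' {x : n → ℝ} (h : vnorm x = 0) : x = 0 := by
  have := Real.sqrt_eq_zero (dot_self_nonneg' x) |>.mp h
  exact dotProduct_self_eq_zero.mp this

lemma vnorm_smul' (c : ℝ) (x : n → ℝ) : vnorm (c • x) = |c| * vnorm x := by
  have : (c • x) ⬝ᵥ (c • x) = c ^ 2 * (x ⬝ᵥ x) := by
    simp [smul_dotProduct, dotProduct_smul, smul_eq_mul]; ring
  rw [vnorm, this, Real.sqrt_mul (sq_nonneg c), Real.sqrt_sq_eq_abs, vnorm]

lemma dot_le_vnorm (x y : n → ℝ) : x ⬝ᵥ y ≤ vnorm x * vnorm y := by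
  have h := Real.sum_mul_le_sqrt_mul_sqrt Finset.univ x y
  simpa [vnorm, dotProduct, sq] using h

lemma abs_dot_le_vnorm (x y : n → ℝ) : |x ⬝ᵥ y| ≤ vnorm x * vnorm y := by
  rcases abs_cases (x ⬝ᵥ y) with ⟨h, _⟩ | ⟨h, _⟩
  · rw [h]; exact dot_le_vnorm x y
  · rw [h]
    have := dot_le_vnorm x (-y)
    simpa [vnorm, dotProduct_neg, neg_dotProduct] using this

lemma mulVec_vnorm_le {m : Type*} [Fintype m] (A : Matrix m n ℝ) (x : n → ℝ) :
    vnorm (A.mulVec x) ≤ Real.sqrt (∑ i, A i ⬝ᵥ A i) * vnorm x := by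
  have key : (A.mulVec x) ⬝ᵥ (A.mulVec x) ≤ (∑ i, A i ⬝ᵥ A i) * (x ⬝ᵥ x) := by
    have h1 : ∀ i, (A.mulVec x i) * (A.mulVec x i) ≤ (A i ⬝ᵥ A i) * (x ⬝ᵥ x) := by
      intro i
      have h := Finset.sum_mul_sq_le_sq_mul_sq Finset.univ (A i) x
      simpa [Matrix.mulVec, dotProduct, sq] using h
    calc (A.mulVec x) ⬝ᵥ (A.mulVec x) = ∑ i, (A.mulVec x i) * (A.mulVec x i) := rfl
      _ ≤ ∑ i, (A i ⬝ᵥ A i) * (x ⬝ᵥ x) := Finset.sum_le_sum fun i _ => h1 i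
      _ = (∑ i, A i ⬝ᵥ A i) * (x ⬝ᵥ x) := by rw [← Finset.sum_mul]
  calc vnorm (A.mulVec x) = Real.sqrt ((A.mulVec x) ⬝ᵥ (A.mulVec x)) := rfl
    _ ≤ Real.sqrt ((∑ i, A i ⬝ᵥ A i) * (x ⬝ᵥ x)) := Real.sqrt_le_sqrt key
    _ = _ := Real.sqrt_mul (Finset.sum_nonneg fun i _ => dot_self_nonneg' _) _

lemma specNorm_mulVec_le {m : Type*} [Fintype m] (A : Matrix m n ℝ) (x : n → ℝ) :
    vnorm (A.mulVec x) ≤ specNorm A * vnorm x := by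
  by_cases hx : vnorm x = 0
  · have : x = 0 := vnorm_eq_zero' hx
    subst this
    simp [hx, Matrix.mulVec_zero]
    have : vnorm (A.mulVec 0) = 0 := by simp [Matrix.mulVec_zero, vnorm, zero_dotProduct]
    simp [Matrix.mulVec_zero] at this ⊢
    simp [vnorm]
  · have hxpos : 0 < vnorm x := lt_of_le_of_ne (vnorm_nonneg' x) (Ne.symm hx)
    set c := vnorm x with hc
    have hunit : vnorm (c⁻¹ • x) = 1 := by
      rw [vnorm_smul', abs_of_pos (inv_pos.mpr hxpos)]
      field_simp
      exact hc.symm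
    have hbdd : BddAbove {d : ℝ | ∃ z : n → ℝ, vnorm z = 1 ∧ d = vnorm (A.mulVec z)} := by
      refine ⟨Real.sqrt (∑ i, A i ⬝ᵥ A i), ?_⟩
      rintro d ⟨z, hz, rfl⟩
      have := mulVec_vnorm_le A z
      rwa [hz, mul_one] at this
    have hmem : vnorm (A.mulVec (c⁻¹ • x)) ∈
        {d : ℝ | ∃ z : n → ℝ, vnorm z = 1 ∧ d = vnorm (A.mulVec z)} := ⟨_, hunit, rfl⟩
    have hle : vnorm (A.mulVec (c⁻¹ • x)) ≤ specNorm A := le_csSup hbdd hmem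
    rw [Matrix.mulVec_smul, vnorm_smul', abs_of_pos (inv_pos.mpr hxpos)] at hle
    calc vnorm (A.mulVec x) = c * (c⁻¹ * vnorm (A.mulVec x)) := by field_simp
      _ ≤ c * specNorm A := by
          exact mul_le_mul_of_nonneg_left hle (le_of_lt hxpos)
      _ = specNorm A * vnorm x := by rw [mul_comm, hc]

lemma sq_bound_aux {c η : ℝ} (h1 : c ≤ 1) (h2 : 1 - η / 4 ≤ c) : 1 - c ^ 2 ≤ η / 2 := by
  nlinarith

lemma num_final_aux {ρ1 η cα cβ r : ℝ} (hρ : 0 ≤ ρ1) (hη0 : 0 < η) (hη1 : η < 1)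
    (hcα : 1 - η / 4 ≤ cα) (hcβ : 1 - η / 4 ≤ cβ) (hcα1 : cα ≤ 1) (hcβ1 : cβ ≤ 1)
    (hr : -(ρ1 * (η / 2)) ≤ r) : ρ1 * (1 - η) ≤ ρ1 * cα * cβ + r := by
  have key : (1 - η / 4) * (1 - η / 4) ≤ cα * cβ :=
    mul_le_mul hcα hcβ (by linarith) (by linarith)
  have key2 : ρ1 * ((1 - η / 4) * (1 - η / 4)) ≤ ρ1 * (cα * cβ) :=
    mul_le_mul_of_nonneg_left key hρ
  nlinarith [key2, mul_nonneg hρ (sq_nonneg η)]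

lemma core_ineq {dx dy : ℕ} (T : Matrix (Fin dx) (Fin dy) ℝ) (ρ1 : ℝ)
    (hρnn : 0 ≤ ρ1)
    (hbound : ∀ y : Fin dy → ℝ, vnorm (T.mulVec y) ≤ ρ1 * vnorm y)
    (a1 : Fin dx → ℝ) (b1 : Fin dy → ℝ) (ha1 : vnorm a1 = 1) (hb1 : vnorm b1 = 1)
    (hTb : T.mulVec b1 = ρ1 • a1) (hTa : Tᵀ.mulVec a1 = ρ1 • b1)
    (η : ℝ) (hη0 : 0 < η) (hη1 : η < 1)
    (x : Fin dx → ℝ) (y : Fin dy → ℝ) (hxn : vnorm x = 1) (hyn : vnorm y = 1)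
    (hal : x ⬝ᵥ a1 + y ⬝ᵥ b1 ≥ 2 - η / 4) :
    x ⬝ᵥ T.mulVec y ≥ ρ1 * (1 - η) := by
  have hxx : x ⬝ᵥ x = 1 := by rw [← sq_vnorm, hxn]; norm_num
  have hyy : y ⬝ᵥ y = 1 := by rw [← sq_vnorm, hyn]; norm_num
  have haa : a1 ⬝ᵥ a1 = 1 := by rw [← sq_vnorm, ha1]; norm_num
  have hbb : b1 ⬝ᵥ b1 = 1 := by rw [← sq_vnorm, hb1]; norm_num
  set cα := x ⬝ᵥ a1 with hcα
  set cβ := y ⬝ᵥ b1 with hcβ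
  have hcα1 : cα ≤ 1 := by
    have := dot_le_vnorm x a1; rwa [hxn, ha1, mul_one] at this
  have hcβ1 : cβ ≤ 1 := by
    have := dot_le_vnorm y b1; rwa [hyn, hb1, mul_one] at this
  have hcαlb : cα ≥ 1 - η / 4 := by linarith
  have hcβlb : cβ ≥ 1 - η / 4 := by linarith
  set xp : Fin dx → ℝ := x - cα • a1 with hxp
  set yp : Fin dy → ℝ := y - cβ • b1 with hyp
  have hxpxp : xp ⬝ᵥ xp = 1 - cα ^ 2 := by
    have hax : a1 ⬝ᵥ x = cα := by rw [dotProduct_comm]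
    simp only [hxp, sub_dotProduct, dotProduct_sub, smul_dotProduct, dotProduct_smul,
      smul_eq_mul, hxx, haa, hax, hcα.symm]
    ring
  have hypyp : yp ⬝ᵥ yp = 1 - cβ ^ 2 := by
    have hby : b1 ⬝ᵥ y = cβ := by rw [dotProduct_comm]
    simp only [hyp, sub_dotProduct, dotProduct_sub, smul_dotProduct, dotProduct_smul,
      smul_eq_mul, hyy, hbb, hby, hcβ.symm]
    ring
  have hbyp : b1 ⬝ᵥ yp = 0 := by
    have hby : b1 ⬝ᵥ y = cβ := by rw [dotProduct_comm]
    simp [hyp, dotProduct_sub, dotProduct_smul, smul_eq_mul, hby, hbb]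
  -- decomposition
  have hydec : y = yp + cβ • b1 := by simp [hyp]
  have hxdec : x = xp + cα • a1 := by simp [hxp]
  have haTyp : a1 ⬝ᵥ T.mulVec yp = 0 := by
    rw [Matrix.dotProduct_mulVec, ← Matrix.mulVec_transpose, hTa]
    simp [smul_dotProduct, smul_eq_mul, hbyp]
  have hdec : x ⬝ᵥ T.mulVec y = ρ1 * cα * cβ + xp ⬝ᵥ T.mulVec yp := by
    conv_lhs => rw [hydec, hxdec]
    rw [Matrix.mulVec_add, Matrix.mulVec_smul, hTb]
    simp only [dotProduct_add, add_dotProduct, dotProduct_smul, smul_dotProduct,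
      smul_eq_mul, haTyp]
    have hxa : xp ⬝ᵥ a1 = 0 := by
      have hax : a1 ⬝ᵥ x = cα := by rw [dotProduct_comm]
      have h0 : a1 ⬝ᵥ xp = 0 := by
        simp [hxp, dotProduct_sub, dotProduct_smul, smul_eq_mul, hax, haa]
      rw [dotProduct_comm]; exact h0
    rw [hxa, haa]
    ring
  -- bound the error term
  have hvx : vnorm xp ≤ Real.sqrt (η / 2) := by
    rw [vnorm, hxpxp]
    exact Real.sqrt_le_sqrt (sq_bound_aux hcα1 hcαlb)
  have hvy : vnorm yp ≤ Real.sqrt (η / 2) := by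
    rw [vnorm, hypyp]
    exact Real.sqrt_le_sqrt (sq_bound_aux hcβ1 hcβlb)
  have hprod : vnorm xp * vnorm yp ≤ η / 2 := by
    have h1 : vnorm xp * vnorm yp ≤ Real.sqrt (η / 2) * Real.sqrt (η / 2) :=
      mul_le_mul hvx hvy (vnorm_nonneg' _) (Real.sqrt_nonneg _)
    have h2 : Real.sqrt (η / 2) * Real.sqrt (η / 2) = η / 2 :=
      Real.mul_self_sqrt (by linarith)
    linarith
  have herr : |xp ⬝ᵥ T.mulVec yp| ≤ ρ1 * (η / 2) := by
    have h1 := abs_dot_le_vnorm xp (T.mulVec yp)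
    have h2 := hbound yp
    have h3 : vnorm xp * vnorm (T.mulVec yp) ≤ vnorm xp * (ρ1 * vnorm yp) :=
      mul_le_mul_of_nonneg_left h2 (vnorm_nonneg' xp)
    have h4 : vnorm xp * (ρ1 * vnorm yp) = ρ1 * (vnorm xp * vnorm yp) := by ring
    have h5 : ρ1 * (vnorm xp * vnorm yp) ≤ ρ1 * (η / 2) :=
      mul_le_mul_of_nonneg_left hprod hρnn
    linarith
  have herr' : xp ⬝ᵥ T.mulVec yp ≥ -(ρ1 * (η / 2)) := by
    have := neg_abs_le (xp ⬝ᵥ T.mulVec yp)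
    linarith
  rw [hdec]
  exact num_final_aux hρnn hη0 hη1 hcαlb hcβlb hcα1 hcβ1 herr'
end aux

/-- if `(u,v)` has alignment at least `1 - η/8` with the top canonical pair
`(u*, v*)`, then its (normalized) correlation is at least `ρ₁(1-η)`. -/
theorem stmt_0 {dx dy : ℕ}
    (Sxx : Matrix (Fin dx) (Fin dx) ℝ) (Syy : Matrix (Fin dy) (Fin dy) ℝ)
    (Sxy : Matrix (Fin dx) (Fin dy) ℝ)
    (hx : Sxx.PosDef) (hy : Syy.PosDef)
    (T : Matrix (Fin dx) (Fin dy) ℝ)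
    (hT : T = (hx.posSemidef.sqrt)⁻¹ * Sxy * (hy.posSemidef.sqrt)⁻¹)
    (ρ1 : ℝ) (hρ1 : ρ1 = specNorm T)
    (a1 : Fin dx → ℝ) (b1 : Fin dy → ℝ)
    (ha1 : vnorm a1 = 1) (hb1 : vnorm b1 = 1)
    (hTb : T.mulVec b1 = ρ1 • a1) (hTa : Tᵀ.mulVec a1 = ρ1 • b1)
    (ustar : Fin dx → ℝ) (hustar : ustar = (hx.posSemidef.sqrt)⁻¹.mulVec a1)
    (vstar : Fin dy → ℝ) (hvstar : vstar = (hy.posSemidef.sqrt)⁻¹.mulVec b1)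
    (η : ℝ) (hη : η ∈ Set.Ioo (0 : ℝ) 1)
    (u : Fin dx → ℝ) (v : Fin dy → ℝ) (hu : u ≠ 0) (hv : v ≠ 0)
    (halign : (1/2) * ((u ⬝ᵥ Sxx.mulVec ustar) / vnorm (hx.posSemidef.sqrt.mulVec u)
        + (v ⬝ᵥ Syy.mulVec vstar) / vnorm (hy.posSemidef.sqrt.mulVec v)) ≥ 1 - η / 8) :
    (u ⬝ᵥ Sxy.mulVec v) /
        (Real.sqrt (u ⬝ᵥ Sxx.mulVec u) * Real.sqrt (v ⬝ᵥ Syy.mulVec v)) ≥ ρ1 * (1 - η) := by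
  obtain ⟨hη0, hη1⟩ := hη
  set P := hx.posSemidef.sqrt with hPdef
  set Q := hy.posSemidef.sqrt with hQdef
  have hP2 : P * P = Sxx := hx.posSemidef.sqrt_mul_self
  have hQ2 : Q * Q = Syy := hy.posSemidef.sqrt_mul_self
  have hPH : Pᴴ = P := hx.posSemidef.posSemidef_sqrt.isHermitian
  have hQH : Qᴴ = Q := hy.posSemidef.posSemidef_sqrt.isHermitian
  have hPsym : Pᵀ = P := by
    ext i j
    have := congrFun (congrFun hPH i) j
    simpa [Matrix.conjTranspose_apply, Matrix.transpose_apply] using this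
  have hQsym : Qᵀ = Q := by
    ext i j
    have := congrFun (congrFun hQH i) j
    simpa [Matrix.conjTranspose_apply, Matrix.transpose_apply] using this
  have hPdet : IsUnit P.det := by
    have hdet : P.det * P.det = Sxx.det := by rw [← Matrix.det_mul, hP2]
    refine isUnit_iff_ne_zero.mpr fun h => ?_
    rw [h, mul_zero] at hdet
    exact (ne_of_gt hx.det_pos) hdet.symm
  have hQdet : IsUnit Q.det := by
    have hdet : Q.det * Q.det = Syy.det := by rw [← Matrix.det_mul, hQ2]
    refine isUnit_iff_ne_zero.mpr fun h => ?_
    rw [h, mul_zero] at hdet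
    exact (ne_of_gt hy.det_pos) hdet.symm
  have hPPinv : P * P⁻¹ = 1 := Matrix.mul_nonsing_inv _ hPdet
  have hPinvP : P⁻¹ * P = 1 := Matrix.nonsing_inv_mul _ hPdet
  have hQQinv : Q * Q⁻¹ = 1 := Matrix.mul_nonsing_inv _ hQdet
  have hQinvQ : Q⁻¹ * Q = 1 := Matrix.nonsing_inv_mul _ hQdet
  have hSxy : Sxy = P * T * Q := by
    rw [hT]
    have h1 : P * (P⁻¹ * Sxy * Q⁻¹) * Q = P * P⁻¹ * Sxy * (Q⁻¹ * Q) := by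
      simp only [Matrix.mul_assoc]
    rw [h1, hPPinv, hQinvQ, Matrix.one_mul, Matrix.mul_one]
  set p := P.mulVec u with hp
  set q := Q.mulVec v with hq
  have hdotP : ∀ z : Fin dx → ℝ, u ⬝ᵥ P.mulVec z = p ⬝ᵥ z := by
    intro z
    rw [Matrix.dotProduct_mulVec, ← Matrix.mulVec_transpose, hPsym, ← hp]
  have hdotQ : ∀ z : Fin dy → ℝ, v ⬝ᵥ Q.mulVec z = q ⬝ᵥ z := by
    intro z
    rw [Matrix.dotProduct_mulVec, ← Matrix.mulVec_transpose, hQsym, ← hq]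
  have hSxxu : u ⬝ᵥ Sxx.mulVec u = p ⬝ᵥ p := by
    rw [← hP2, ← Matrix.mulVec_mulVec, hdotP, ← hp]
  have hSyyv : v ⬝ᵥ Syy.mulVec v = q ⬝ᵥ q := by
    rw [← hQ2, ← Matrix.mulVec_mulVec, hdotQ, ← hq]
  have hnum : u ⬝ᵥ Sxy.mulVec v = p ⬝ᵥ T.mulVec q := by
    rw [hSxy, ← Matrix.mulVec_mulVec, ← Matrix.mulVec_mulVec, hdotP, ← hq]
  have hstar1 : u ⬝ᵥ Sxx.mulVec ustar = p ⬝ᵥ a1 := by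
    rw [hustar, Matrix.mulVec_mulVec, ← hP2, Matrix.mul_assoc, hPPinv, Matrix.mul_one, hdotP]
  have hstar2 : v ⬝ᵥ Syy.mulVec vstar = q ⬝ᵥ b1 := by
    rw [hvstar, Matrix.mulVec_mulVec, ← hQ2, Matrix.mul_assoc, hQQinv, Matrix.mul_one, hdotQ]
  have hpne : p ≠ 0 := by
    intro h
    apply hu
    have h2 : P⁻¹.mulVec p = u := by
      rw [hp, Matrix.mulVec_mulVec, hPinvP, Matrix.one_mulVec]
    rw [← h2, h, Matrix.mulVec_zero]
  have hqne : q ≠ 0 := by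
    intro h
    apply hv
    have h2 : Q⁻¹.mulVec q = v := by
      rw [hq, Matrix.mulVec_mulVec, hQinvQ, Matrix.one_mulVec]
    rw [← h2, h, Matrix.mulVec_zero]
  have hnp : 0 < vnorm p :=
    lt_of_le_of_ne (vnorm_nonneg' p) fun h => hpne (vnorm_eq_zero' h.symm)
  have hnq : 0 < vnorm q :=
    lt_of_le_of_ne (vnorm_nonneg' q) fun h => hqne (vnorm_eq_zero' h.symm)
  -- the unit vectors
  set x : Fin dx → ℝ := (vnorm p)⁻¹ • p with hxdef
  set y : Fin dy → ℝ := (vnorm q)⁻¹ • q with hydef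
  have hxn : vnorm x = 1 := by
    rw [hxdef, vnorm_smul', abs_of_pos (inv_pos.mpr hnp), inv_mul_cancel₀ hnp.ne']
  have hyn : vnorm y = 1 := by
    rw [hydef, vnorm_smul', abs_of_pos (inv_pos.mpr hnq), inv_mul_cancel₀ hnq.ne']
  have hxa : x ⬝ᵥ a1 = (p ⬝ᵥ a1) / vnorm p := by
    rw [hxdef, smul_dotProduct, smul_eq_mul, div_eq_inv_mul]
  have hyb : y ⬝ᵥ b1 = (q ⬝ᵥ b1) / vnorm q := by
    rw [hydef, smul_dotProduct, smul_eq_mul, div_eq_inv_mul]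
  rw [hstar1, hstar2] at halign
  have hal : x ⬝ᵥ a1 + y ⬝ᵥ b1 ≥ 2 - η / 4 := by
    rw [hxa, hyb]
    linarith
  have hbound : ∀ z : Fin dy → ℝ, vnorm (T.mulVec z) ≤ ρ1 * vnorm z := by
    intro z
    rw [hρ1]
    exact specNorm_mulVec_le T z
  have hρnn : 0 ≤ ρ1 := by
    have h1 := hbound b1
    rw [hTb, vnorm_smul', ha1, hb1, mul_one, mul_one] at h1
    have h2 := abs_nonneg ρ1
    linarith
  have hcore := core_ineq T ρ1 hρnn hbound a1 b1 ha1 hb1 hTb hTa η hη0 hη1 x y hxn hyn hal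
  have heq : x ⬝ᵥ T.mulVec y = (p ⬝ᵥ T.mulVec q) / (vnorm p * vnorm q) := by
    rw [hxdef, hydef, Matrix.mulVec_smul, smul_dotProduct, dotProduct_smul,
      smul_eq_mul, smul_eq_mul]
    field_simp
  rw [hnum, hSxxu, hSyyv]
  have hvp : Real.sqrt (p ⬝ᵥ p) = vnorm p := rfl
  have hvq : Real.sqrt (q ⬝ᵥ q) = vnorm q := rfl
  rw [hvp, hvq, ← heq]
  exact hcore
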